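/- arXiv:2604.05542 — 2 statements merged into one kernel-verified Lean document; each statement's English description precedes it below -/
import Mathlib

section
/- Let ℰ_m = {t ∈ ℂ^{n+1} : |t₁|^{2m} + Σ_{j=2}^{n+1} |t_j|² < 1} be the egg domain with m ∈ ℕ, m ≥ 1. Then its volume is vol(ℰ_m) = π^{n+1} Γ(1/m) / (m Γ(n+1+1/m)). -/
open MeasureTheory intervalIntegral

private lemma egg_J_rec (m n : ℕ) (hm : 1 ≤ m) :
    (1 + m * (n+1)) * ∫ y in (0:ℝ)..1, y * (1 - y^(2*m))^(n+1) =
      (m * (n+1)) * ∫ y in (0:ℝ)..1, y * (1 - y^(2*m))^n := by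
  set K := 2*m with hK
  have hK1 : 1 ≤ K := by omega
  -- derivative identity
  have hderiv : ∀ y : ℝ, HasDerivAt (fun y : ℝ => y^2 * (1 - y^K)^(n+1))
      (2*y*(1-y^K)^(n+1) - (K*(n+1)) * (y^(K+1) * (1-y^K)^n)) y := by
    intro y
    have h1 : HasDerivAt (fun y : ℝ => (1 - y^K)) (-(K * y^(K-1))) y := by
      simpa using ((hasDerivAt_pow K y).const_sub 1)
    have h2 : HasDerivAt (fun y : ℝ => (1 - y^K)^(n+1))
        ((n+1) * (1 - y^K)^n * (-(K * y^(K-1)))) y := by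
      simpa using h1.fun_pow (n+1)
    have h3 := (hasDerivAt_pow 2 y).fun_mul h2
    refine h3.congr_deriv (Eq.symm ?_)
    have hy : y^2 * y^(K-1) = y^(K+1) := by
      rw [← pow_add]; congr 1; omega
    simp only [pow_one, Nat.cast_ofNat]
    linear_combination ((K:ℝ)*((n:ℝ)+1)*(1-y^K)^n) * hy
  have hint : ∫ y in (0:ℝ)..1, (2*y*(1-y^K)^(n+1) - (K*(n+1)) * (y^(K+1) * (1-y^K)^n)) = 0 := by
    rw [integral_eq_sub_of_hasDerivAt (fun y _ => hderiv y)
      (Continuous.intervalIntegrable (by fun_prop) _ _)]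
    simp
  have hi1 : IntervalIntegrable (fun y : ℝ => 2*y*(1-y^K)^(n+1)) volume 0 1 :=
    Continuous.intervalIntegrable (by fun_prop) _ _
  have hi2 : IntervalIntegrable (fun y : ℝ => (K*(n+1):ℝ) * (y^(K+1) * (1-y^K)^n)) volume 0 1 :=
    Continuous.intervalIntegrable (by fun_prop) _ _
  rw [integral_sub hi1 hi2] at hint
  have e1 : ∫ y in (0:ℝ)..1, 2*y*(1-y^K)^(n+1) = 2 * ∫ y in (0:ℝ)..1, y*(1-y^K)^(n+1) := by
    rw [← intervalIntegral.integral_const_mul]; congr 1; ext y; ring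
  have e2 : ∫ y in (0:ℝ)..1, (K*(n+1):ℝ) * (y^(K+1) * (1-y^K)^n)
      = (K*(n+1):ℝ) * ∫ y in (0:ℝ)..1, (y^(K+1) * (1-y^K)^n) := integral_const_mul _ _
  have e3 : ∫ y in (0:ℝ)..1, (y^(K+1) * (1-y^K)^n)
      = (∫ y in (0:ℝ)..1, y*(1-y^K)^n) - ∫ y in (0:ℝ)..1, y*(1-y^K)^(n+1) := by
    rw [← integral_sub (Continuous.intervalIntegrable (by fun_prop) _ _)
      (Continuous.intervalIntegrable (by fun_prop) _ _)]
    congr 1; ext y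
    have : y^(K+1) = y * y^K := by rw [pow_succ]; ring
    rw [this]; ring
  rw [e1, e2, e3] at hint
  have hKr : ((K:ℕ):ℝ) = 2*(m:ℝ) := by rw [hK]; push_cast; ring
  rw [hKr] at hint
  linarith [hint]

private lemma egg_J_val (m : ℕ) (hm : 1 ≤ m) (n : ℕ) :
    ∫ y in (0:ℝ)..1, y * (1 - y^(2*m))^n =
      Real.Gamma (1/m) * n.factorial / (2 * m * Real.Gamma ((n:ℝ) + 1 + 1/m)) := by
  have hm0 : (0:ℝ) < m := by exact_mod_cast hm
  have hminv : (0:ℝ) < 1/m := by positivity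
  induction n with
  | zero =>
      have h0 : ∫ y in (0:ℝ)..1, y * (1 - y^(2*m))^0 = 1/2 := by
        simp [integral_id]
      rw [h0]
      simp only [Nat.cast_zero, Nat.factorial_zero, Nat.cast_one]
      rw [show (0:ℝ) + 1 + 1/m = (1/m) + 1 by ring, Real.Gamma_add_one (ne_of_gt hminv)]
      have hG : Real.Gamma (1/m) ≠ 0 := ne_of_gt (Real.Gamma_pos_of_pos hminv)
      field_simp
  | succ n ih =>
      have hrec := egg_J_rec m n hm
      rw [ih] at hrec
      have hpos : (0:ℝ) < 1 + m * (n+1) := by positivity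
      have hGpos : (0:ℝ) < Real.Gamma ((n:ℝ) + 1 + 1/m) := Real.Gamma_pos_of_pos (by positivity)
      have hGpos2 : (0:ℝ) < Real.Gamma ((n:ℝ) + 1 + 1 + 1/m) := Real.Gamma_pos_of_pos (by positivity)
      have hstep : Real.Gamma ((n:ℝ) + 1 + 1 + 1/m) = ((n:ℝ) + 1 + 1/m) * Real.Gamma ((n:ℝ) + 1 + 1/m) := by
        rw [show (n:ℝ) + 1 + 1 + 1/m = ((n:ℝ) + 1 + 1/m) + 1 by ring,
          Real.Gamma_add_one (by positivity)]
      have : ∫ y in (0:ℝ)..1, y * (1 - y^(2*m))^(n+1)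
          = (m * (n+1)) * (Real.Gamma (1/m) * n.factorial / (2 * m * Real.Gamma ((n:ℝ) + 1 + 1/m))) / (1 + m * (n+1)) := by
        rw [eq_div_iff (ne_of_gt hpos)]
        linarith [hrec]
      rw [this, Nat.factorial_succ]
      push_cast
      rw [hstep]
      have h1 : ((n:ℝ) + 1 + 1/m) ≠ 0 := by positivity
      have h2 : Real.Gamma ((n:ℝ) + 1 + 1/m) ≠ 0 := ne_of_gt hGpos
      field_simp
      ring

private lemma egg_section_vol (n : ℕ) (R : ℝ) (hR : 0 < R) :
    volume {y : Fin n → ℂ | ∑ j, ‖y j‖^2 < R} =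
      ENNReal.ofReal (Real.pi ^ n / n.factorial * R ^ n) := by
  rcases Nat.eq_zero_or_pos n with hn | hn
  · subst hn
    have : {y : Fin 0 → ℂ | ∑ j, ‖y j‖^2 < R} = Set.univ := by
      ext y; simp [hR]
    rw [this]
    rw [volume_pi, Measure.pi_univ]
    simp
  · haveI : Nonempty (Fin n) := Fin.pos_iff_nonempty.mp hn
    have hset : {y : Fin n → ℂ | ∑ j, ‖y j‖^2 < R}
        = {y : Fin n → ℂ | (∑ j, ‖y j‖ ^ (2:ℝ)) ^ (1/(2:ℝ)) < Real.sqrt R} := by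
      ext y
      have h1 : ∀ j, ‖y j‖ ^ (2:ℝ) = ‖y j‖ ^ (2:ℕ) := fun j => by
        rw [← Real.rpow_natCast]; norm_num
      simp only [Set.mem_setOf_eq, h1]
      have h2 : (0:ℝ) ≤ ∑ j, ‖y j‖ ^ (2:ℕ) := by positivity
      rw [← Real.sqrt_eq_rpow]
      exact (Real.sqrt_lt_sqrt_iff h2).symm
    rw [hset, Complex.volume_sum_rpow_lt _ one_le_two]
    have hcard : Fintype.card (Fin n) = n := Fintype.card_fin n
    rw [hcard]
    have hG1 : Real.Gamma (2/2 + 1) = 1 := by norm_num [Real.Gamma_two]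
    have hG2 : Real.Gamma (2 * (n:ℝ) / 2 + 1) = n.factorial := by
      rw [show 2 * (n:ℝ) / 2 + 1 = (n:ℝ) + 1 by ring, Real.Gamma_nat_eq_factorial]
    rw [hG1, hG2, mul_one]
    rw [← ENNReal.ofReal_pow (Real.sqrt_nonneg R), ← ENNReal.ofReal_mul (by positivity)]
    congr 1
    rw [pow_mul, Real.sq_sqrt hR.le]
    ring

private lemma egg_plane_integral (m n : ℕ) (c : ℝ) :
    ∫ z : ℂ, Set.indicator (Set.Iio (1:ℝ)) (fun r => c * (1 - r^(2*m))^n) ‖z‖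
      = (2 * Real.pi) * (c * ∫ y in (0:ℝ)..1, y * (1-y^(2*m))^n) := by
  rw [integral_fun_norm_addHaar (volume : Measure ℂ)
    (Set.indicator (Set.Iio (1:ℝ)) (fun r => c * (1 - r^(2*m))^n))]
  rw [Complex.finrank_real_complex, measureReal_def, Complex.volume_ball]
  simp only [pow_one, smul_eq_mul]
  have h1 : (ENNReal.ofReal (1:ℝ) ^ 2 * (NNReal.pi : ENNReal)).toReal = Real.pi := by
    simp
  rw [h1]
  have h2 : ∫ y in Set.Ioi (0:ℝ), y ^ (2-1) * Set.indicator (Set.Iio (1:ℝ))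
      (fun r => c * (1 - r^(2*m))^n) y
      = ∫ y in Set.Ioo (0:ℝ) 1, y * (c * (1 - y^(2*m))^n) := by
    rw [← Set.Ioi_inter_Iio, ← setIntegral_indicator measurableSet_Iio]
    congr 1
    ext y
    rw [Set.indicator_apply, Set.indicator_apply]
    by_cases hy : y ∈ Set.Iio (1:ℝ) <;> simp [hy]
  rw [h2]
  rw [← integral_Ioc_eq_integral_Ioo, ← intervalIntegral.integral_of_le zero_le_one]
  rw [show (∫ y in (0:ℝ)..1, y * (c * (1 - y^(2*m))^n))
      = c * ∫ y in (0:ℝ)..1, y * (1-y^(2*m))^n by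
    rw [← intervalIntegral.integral_const_mul]; congr 1; ext y; ring]
  ring

/-- The egg domain `ℰ_m = {t ∈ ℂ^{n+1} : |t₁|^{2m} + Σ_{j=2}^{n+1} |t_j|² < 1}`. -/
def eggDomain (n m : ℕ) : Set (Fin (n + 1) → ℂ) :=
  {t | ‖t 0‖ ^ (2 * m) + ∑ j ∈ Finset.univ.erase 0, ‖t j‖ ^ 2 < 1}

/-- **Volume of the egg domain:**
`vol(ℰ_m) = π^{n+1} Γ(1/m) / (m Γ(n+1+1/m))`. -/
theorem volume_eggDomain (n m : ℕ) (hm : 1 ≤ m) :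
    volume (eggDomain n m) =
      ENNReal.ofReal (Real.pi ^ (n + 1) * Real.Gamma (1 / m) /
        (m * Real.Gamma ((n : ℝ) + 1 + 1 / m))) := by
  set c : ℝ := Real.pi ^ n / n.factorial with hc
  set T : Set (ℂ × (Fin n → ℂ)) := {p | ‖p.1‖^(2*m) + ∑ j, ‖p.2 j‖^2 < 1} with hT
  have hTmeas : MeasurableSet T := by
    apply measurableSet_lt _ measurable_const
    fun_prop
  have hpre : eggDomain n m = (MeasurableEquiv.piFinSuccAbove (fun _ : Fin (n+1) => ℂ) 0) ⁻¹' T := by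
    ext t
    simp only [eggDomain, Set.mem_preimage, Set.mem_setOf_eq, hT,
      MeasurableEquiv.piFinSuccAbove, MeasurableEquiv.coe_mk, Equiv.symm_symm,
      Fin.insertNthEquiv, Equiv.coe_fn_symm_mk, Fin.removeNth]
    have hsum : ∑ j ∈ Finset.univ.erase 0, ‖t j‖ ^ 2
        = ∑ j : Fin n, ‖t ((0:Fin (n+1)).succAbove j)‖ ^ 2 := by
      have h := Fin.sum_univ_succAbove (fun j => ‖t j‖ ^ 2) 0
      have h2 : ∑ j ∈ Finset.univ.erase 0, ‖t j‖ ^ 2 + ‖t 0‖ ^ 2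
          = ∑ j : Fin (n+1), ‖t j‖ ^ 2 :=
        Finset.sum_erase_add _ _ (Finset.mem_univ 0)
      linarith [h, h2]
    rw [hsum]
  rw [hpre, (volume_preserving_piFinSuccAbove (fun _ : Fin (n+1) => ℂ) 0).measure_preimage
    hTmeas.nullMeasurableSet]
  rw [Measure.volume_eq_prod, Measure.prod_apply hTmeas]
  have hsec : ∀ z : ℂ, volume (Prod.mk z ⁻¹' T)
      = ENNReal.ofReal (Set.indicator (Set.Iio (1:ℝ)) (fun r => c * (1-r^(2*m))^n) ‖z‖) := by
    intro z
    have hpr : Prod.mk z ⁻¹' T = {y : Fin n → ℂ | ∑ j, ‖y j‖^2 < 1 - ‖z‖^(2*m)} := by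
      ext y
      simp only [Set.mem_preimage, hT, Set.mem_setOf_eq]
      constructor <;> intro h <;> linarith
    rw [hpr]
    by_cases hz : ‖z‖ < 1
    · have hR : 0 < 1 - ‖z‖^(2*m) := by
        have := pow_lt_one₀ (norm_nonneg z) hz (by omega : 2*m ≠ 0)
        linarith
      rw [egg_section_vol n _ hR, Set.indicator_of_mem (show ‖z‖ ∈ Set.Iio 1 from hz), ← hc]
    · have h1 : 1 ≤ ‖z‖^(2*m) := one_le_pow₀ (le_of_not_gt hz)
      have hempty : {y : Fin n → ℂ | ∑ j, ‖y j‖^2 < 1 - ‖z‖^(2*m)} = ∅ := by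
        rw [Set.eq_empty_iff_forall_notMem]
        intro y hy
        simp only [Set.mem_setOf_eq] at hy
        have : (0:ℝ) ≤ ∑ j, ‖y j‖^2 := by positivity
        linarith
      rw [hempty, measure_empty, Set.indicator_of_notMem (show ‖z‖ ∉ Set.Iio 1 from hz)]
      simp
  simp_rw [hsec]
  have hnn : 0 ≤ᵐ[volume] fun z : ℂ =>
      Set.indicator (Set.Iio (1:ℝ)) (fun r => c * (1-r^(2*m))^n) ‖z‖ := by
    refine Filter.Eventually.of_forall fun z => ?_
    simp only [Pi.zero_apply]
    by_cases hz : ‖z‖ ∈ Set.Iio (1:ℝ)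
    · rw [Set.indicator_of_mem hz]
      have h1 : ‖z‖^(2*m) ≤ 1 := pow_le_one₀ (norm_nonneg z) (le_of_lt hz)
      have hc0 : 0 ≤ c := by rw [hc]; positivity
      have : (0:ℝ) ≤ 1 - ‖z‖^(2*m) := by linarith
      positivity
    · rw [Set.indicator_of_notMem hz]
  have hint : Integrable (fun z : ℂ =>
      Set.indicator (Set.Iio (1:ℝ)) (fun r => c * (1-r^(2*m))^n) ‖z‖) := by
    have heq : (fun z : ℂ => Set.indicator (Set.Iio (1:ℝ)) (fun r => c * (1-r^(2*m))^n) ‖z‖)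
        = Set.indicator (Metric.ball (0:ℂ) 1) (fun z => c * (1-‖z‖^(2*m))^n) := by
      ext z
      by_cases hz : ‖z‖ < 1
      · rw [Set.indicator_of_mem (show ‖z‖ ∈ Set.Iio 1 from hz),
          Set.indicator_of_mem (mem_ball_zero_iff.mpr hz)]
      · rw [Set.indicator_of_notMem (show ‖z‖ ∉ Set.Iio 1 from hz),
          Set.indicator_of_notMem (fun h => hz (mem_ball_zero_iff.mp h))]
    rw [heq, integrable_indicator_iff measurableSet_ball]
    refine IntegrableOn.mono_set ?_ Metric.ball_subset_closedBall
    exact ContinuousOn.integrableOn_compact (isCompact_closedBall 0 1)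
      (Continuous.continuousOn (by fun_prop))
  rw [← ofReal_integral_eq_lintegral_ofReal hint hnn]
  rw [egg_plane_integral m n c, egg_J_val m hm n]
  congr 1
  have hm0 : (0:ℝ) < m := by exact_mod_cast hm
  have hfac : (0:ℝ) < n.factorial := by exact_mod_cast n.factorial_pos
  have hG : (0:ℝ) < Real.Gamma ((n:ℝ) + 1 + 1/m) := Real.Gamma_pos_of_pos (by positivity)
  rw [hc]
  field_simp
  ring
end

section
/- Define for m ≥ 1 the quantity J_m(0) = (n+1+1/m)^n · [Γ(n+1+2/m) Γ(1/m)² / (Γ(n+1+1/m)² Γ(2/m))] · π^{n+1}/m. Then J_m(0) is strictly decreasing in m ∈ ℕ; in particular J_m(0) < J_1(0) = (n+2)^{n+1} π^{n+1}/(n+1)! for all integers m > 1. -/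
set_option maxHeartbeats 1000000

open Finset

/-- The Bergman canonical invariant of the egg domain
`ℰ_m = {|t₁|^{2m} + Σ_{j=2}^{n+1}|t_j|² < 1} ⊂ ℂ^{n+1}` at the origin. -/
noncomputable def eggInvariant (n m : ℕ) : ℝ :=
  ((n : ℝ) + 1 + 1 / m) ^ n *
    (Real.Gamma ((n : ℝ) + 1 + 2 / m) * Real.Gamma (1 / m) ^ 2 /
      (Real.Gamma ((n : ℝ) + 1 + 1 / m) ^ 2 * Real.Gamma (2 / m))) *
    Real.pi ^ (n + 1) / m

/-- The elementary "core" of the invariant after cancelling Gamma factors. -/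
noncomputable def eggCore (n : ℕ) (x : ℝ) : ℝ :=
  ((n:ℝ)+1+x)^n * (∏ k ∈ Finset.range n, ((k:ℝ)+1+2*x)) / (∏ k ∈ Finset.range n, ((k:ℝ)+1+x))^2

/-- Logarithm of the core. -/
noncomputable def eggLog (n : ℕ) (x : ℝ) : ℝ :=
  n * Real.log ((n:ℝ)+1+x)
    + ∑ k ∈ Finset.range n, (Real.log ((k:ℝ)+1+2*x) - 2 * Real.log ((k:ℝ)+1+x))

lemma egg_tele1 (n : ℕ) (x : ℝ) :
    ∑ k ∈ Finset.range n, (2/((k:ℝ)+2+x) - 2/((k:ℝ)+1+x))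
      = 2/((n:ℝ)+1+x) - 2/(1+x) := by
  have h := Finset.sum_range_sub (fun k => 2/((k:ℝ)+1+x)) n
  push_cast at h
  norm_num at h
  rw [show ∑ k ∈ Finset.range n, (2/((k:ℝ)+2+x) - 2/((k:ℝ)+1+x))
      = ∑ k ∈ Finset.range n, (2/((k:ℝ)+1+1+x) - 2/((k:ℝ)+1+x)) from
    Finset.sum_congr rfl fun k _ => by ring_nf, Finset.sum_sub_distrib]
  linarith [h]

lemma egg_tele2 (n : ℕ) (x : ℝ) :
    ∑ k ∈ Finset.range n, (1/((k:ℝ)+2+x) - 1/((k:ℝ)+3+x))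
      = 1/(2+x) - 1/((n:ℝ)+2+x) := by
  have h := Finset.sum_range_sub' (fun k => 1/((k:ℝ)+2+x)) n
  push_cast at h
  norm_num at h
  rw [show ∑ k ∈ Finset.range n, (1/((k:ℝ)+2+x) - 1/((k:ℝ)+3+x))
      = ∑ k ∈ Finset.range n, (1/((k:ℝ)+2+x) - 1/((k:ℝ)+1+2+x)) from
    Finset.sum_congr rfl fun k _ => by ring_nf, Finset.sum_sub_distrib]
  simp only [one_div] at h ⊢
  linarith [h]

/-- Positivity of the logarithmic derivative on `(0,1)`. -/
lemma egg_deriv_pos_key (n : ℕ) (hn : 1 ≤ n) (x : ℝ) (hx0 : 0 < x) (hx1 : x < 1) :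
    0 < (n:ℝ)/((n:ℝ)+1+x) + ∑ k ∈ Finset.range n, (2/((k:ℝ)+1+2*x) - 2/((k:ℝ)+1+x)) := by
  have hN1 : (1:ℝ) ≤ (n:ℝ) := by exact_mod_cast hn
  have hx2 : (0:ℝ) < 1 + x := by linarith
  have hx3 : (0:ℝ) < 2 + x := by linarith
  have hx4 : (0:ℝ) < 3 + x := by linarith
  have hNx : (0:ℝ) < (n:ℝ) + 1 + x := by linarith
  have hNx2 : (0:ℝ) < (n:ℝ) + 2 + x := by linarith
  have h1x : (0:ℝ) < 1 - x := by linarith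
  have step2 : ∑ k ∈ Finset.range n, (2/((k:ℝ)+1+2*x) - 2/((k:ℝ)+1+x))
      ≥ ∑ k ∈ Finset.range n, ((2/((k:ℝ)+2+x) - 2/((k:ℝ)+1+x)) + 2*(1-x)*(1/(((k:ℝ)+2+x)^2))) := by
    apply Finset.sum_le_sum
    intro k _
    have ha : (0:ℝ) < (k:ℝ)+2+x := by positivity
    have ht : (0:ℝ) < (k:ℝ)+1+2*x := by positivity
    have hid : 2/((k:ℝ)+1+2*x) - ((2/((k:ℝ)+2+x) - 2/((k:ℝ)+1+x)) + 2*(1-x)*(1/(((k:ℝ)+2+x)^2)))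
        - 2/((k:ℝ)+1+x) = 2*(1-x)^2/(((k:ℝ)+1+2*x)*((k:ℝ)+2+x)^2) := by
      field_simp
      ring
    have hnn : (0:ℝ) ≤ 2*(1-x)^2/(((k:ℝ)+1+2*x)*((k:ℝ)+2+x)^2) := by positivity
    rw [← hid] at hnn
    linarith
  have hsplit : ∑ k ∈ Finset.range n, ((2/((k:ℝ)+2+x) - 2/((k:ℝ)+1+x)) + 2*(1-x)*(1/(((k:ℝ)+2+x)^2)))
      = (2/((n:ℝ)+1+x) - 2/(1+x)) + 2*(1-x)*(∑ k ∈ Finset.range n, 1/(((k:ℝ)+2+x)^2)) := by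
    rw [Finset.sum_add_distrib, egg_tele1, ← Finset.mul_sum]
  rw [hsplit] at step2
  set T : ℝ := ∑ k ∈ Finset.range n, 1/(((k:ℝ)+2+x)^2) with hT
  have hTlb : T ≥ (1/(2+x) - 1/((n:ℝ)+2+x)) + 1/((2+x)^2*(3+x)) := by
    have h1 : ∀ k ∈ Finset.range n,
        (1/((k:ℝ)+2+x) - 1/((k:ℝ)+3+x)) + (if k = 0 then 1/((2+x)^2*(3+x)) else 0)
          ≤ 1/(((k:ℝ)+2+x)^2) := by
      intro k _
      by_cases hk : k = 0
      · subst hk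
        simp only [if_pos, Nat.cast_zero]
        have heq : (1/((0:ℝ)+2+x) - 1/((0:ℝ)+3+x)) + 1/((2+x)^2*(3+x)) = 1/(((0:ℝ)+2+x)^2) := by
          field_simp
          ring
        linarith [heq]
      · simp only [if_neg hk, add_zero]
        have ha : (0:ℝ) < (k:ℝ)+2+x := by positivity
        have hb : (0:ℝ) < (k:ℝ)+3+x := by positivity
        have hid : 1/((k:ℝ)+2+x) - 1/((k:ℝ)+3+x) = 1/(((k:ℝ)+2+x)*((k:ℝ)+3+x)) := by
          field_simp
          ring
        rw [hid]
        apply one_div_le_one_div_of_le (by positivity)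
        nlinarith
    have h2 := Finset.sum_le_sum h1
    rw [Finset.sum_add_distrib, egg_tele2] at h2
    have h3 : ∑ k ∈ Finset.range n, (if k = 0 then 1/((2+x)^2*(3+x)) else (0:ℝ))
        = 1/((2+x)^2*(3+x)) := by
      rw [Finset.sum_ite_eq' (Finset.range n) 0 (fun _ => 1/((2+x)^2*(3+x)))]
      simp only [Finset.mem_range, if_pos (by omega : 0 < n)]
    rw [h3] at h2
    exact h2
  have key : 2*((1/(2+x) - 1/((n:ℝ)+2+x)) + 1/((2+x)^2*(3+x))) - (n:ℝ)/((1+x)*((n:ℝ)+1+x))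
      = (4 + 10*x + 8*x^2 + 2*x^3 + (n:ℝ)*(8*x^2+5*x^3+x^4 - 6) + (n:ℝ)^2*(2 + 8*x + 5*x^2 + x^3))
        / ((2+x)^2*(3+x)*((n:ℝ)+2+x)*(1+x)*((n:ℝ)+1+x)) := by
    field_simp
    ring
  have hnum : 0 < 4 + 10*x + 8*x^2 + 2*x^3 + (n:ℝ)*(8*x^2+5*x^3+x^4 - 6)
      + (n:ℝ)^2*(2 + 8*x + 5*x^2 + x^3) := by
    have hdec : 4 + 10*x + 8*x^2 + 2*x^3 + (n:ℝ)*(8*x^2+5*x^3+x^4 - 6)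
        + (n:ℝ)^2*(2 + 8*x + 5*x^2 + x^3)
        = 2*(((n:ℝ)-1)*((n:ℝ)-2)) + (10+8*(n:ℝ)^2)*x + (8+8*(n:ℝ)+5*(n:ℝ)^2)*x^2
          + (2+5*(n:ℝ)+(n:ℝ)^2)*x^3 + (n:ℝ)*x^4 := by ring
    have h12 : (n:ℝ) = 1 ∨ (2:ℝ) ≤ (n:ℝ) := by
      rcases Nat.lt_or_ge n 2 with h | h
      · left
        have : n = 1 := by omega
        rw [this]; norm_num
      · right; exact_mod_cast h
    have hterm2 : 0 < (10+8*(n:ℝ)^2)*x := by positivity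
    have hterm3 : 0 ≤ (8+8*(n:ℝ)+5*(n:ℝ)^2)*x^2 := by positivity
    have hterm4 : 0 ≤ (2+5*(n:ℝ)+(n:ℝ)^2)*x^3 := by positivity
    have hterm5 : 0 ≤ (n:ℝ)*x^4 := by positivity
    rcases h12 with h | h
    · rw [hdec, h]; nlinarith
    · have : 0 ≤ ((n:ℝ)-1)*((n:ℝ)-2) := mul_nonneg (by linarith) (by linarith)
      rw [hdec]; linarith
  have hden : (0:ℝ) < (2+x)^2*(3+x)*((n:ℝ)+2+x)*(1+x)*((n:ℝ)+1+x) := by positivity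
  have hkey2 : 0 < 2*((1/(2+x) - 1/((n:ℝ)+2+x)) + 1/((2+x)^2*(3+x)))
      - (n:ℝ)/((1+x)*((n:ℝ)+1+x)) := by
    rw [key]; exact div_pos hnum hden
  have hTfin : (n:ℝ)/((1+x)*((n:ℝ)+1+x)) < 2*T := by linarith
  have e2 : (n:ℝ)/((n:ℝ)+1+x) + ((2/((n:ℝ)+1+x) - 2/(1+x)) + 2*(1-x)*T)
      = (1-x)*(2*T - (n:ℝ)/((1+x)*((n:ℝ)+1+x))) := by
    field_simp
    ring
  have hgoal : 0 < (n:ℝ)/((n:ℝ)+1+x) + ((2/((n:ℝ)+1+x) - 2/(1+x)) + 2*(1-x)*T) := by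
    rw [e2]; exact mul_pos h1x (by linarith)
  linarith [step2, hgoal]

lemma eggLog_hasDerivAt (n : ℕ) (x : ℝ) (hx : 0 ≤ x) :
    HasDerivAt (eggLog n)
      ((n:ℝ)/((n:ℝ)+1+x) + ∑ k ∈ Finset.range n, (2/((k:ℝ)+1+2*x) - 2/((k:ℝ)+1+x))) x := by
  have h1 : HasDerivAt (fun y : ℝ => Real.log ((n:ℝ)+1+y)) (1/((n:ℝ)+1+x)) x := by
    have := ((hasDerivAt_id x).const_add ((n:ℝ)+1)).log
      (by positivity : ((n:ℝ)+1+x) ≠ 0)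
    simpa using this
  have h2 : ∀ k : ℕ, HasDerivAt (fun y : ℝ => Real.log ((k:ℝ)+1+2*y)
      - 2 * Real.log ((k:ℝ)+1+y)) (2/((k:ℝ)+1+2*x) - 2*(1/((k:ℝ)+1+x))) x := by
    intro k
    have ha : HasDerivAt (fun y : ℝ => Real.log ((k:ℝ)+1+2*y)) (2/((k:ℝ)+1+2*x)) x := by
      have := (((hasDerivAt_id x).const_mul (2:ℝ)).const_add ((k:ℝ)+1)).log
        (by positivity : ((k:ℝ)+1+2*x) ≠ 0)
      simpa using this
    have hb : HasDerivAt (fun y : ℝ => Real.log ((k:ℝ)+1+y)) (1/((k:ℝ)+1+x)) x := by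
      have := ((hasDerivAt_id x).const_add ((k:ℝ)+1)).log
        (by positivity : ((k:ℝ)+1+x) ≠ 0)
      simpa using this
    exact ha.sub (hb.const_mul 2)
  have hsum : HasDerivAt (fun y : ℝ => ∑ k ∈ Finset.range n,
      (Real.log ((k:ℝ)+1+2*y) - 2 * Real.log ((k:ℝ)+1+y)))
      (∑ k ∈ Finset.range n, (2/((k:ℝ)+1+2*x) - 2*(1/((k:ℝ)+1+x)))) x :=
    HasDerivAt.fun_sum fun k _ => h2 k
  have hmain := (h1.const_mul (n:ℝ)).add hsum
  have heq : (n:ℝ) * (1/((n:ℝ)+1+x)) + ∑ k ∈ Finset.range n, (2/((k:ℝ)+1+2*x) - 2*(1/((k:ℝ)+1+x)))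
      = (n:ℝ)/((n:ℝ)+1+x) + ∑ k ∈ Finset.range n, (2/((k:ℝ)+1+2*x) - 2/((k:ℝ)+1+x)) := by
    rw [mul_one_div]
    congr 1
    exact Finset.sum_congr rfl fun k _ => by rw [mul_one_div]
  rw [heq] at hmain
  exact hmain

lemma eggLog_strictMonoOn (n : ℕ) (hn : 1 ≤ n) : StrictMonoOn (eggLog n) (Set.Icc 0 1) := by
  apply strictMonoOn_of_deriv_pos (convex_Icc 0 1)
  · intro x hx
    exact (eggLog_hasDerivAt n x hx.1).continuousAt.continuousWithinAt
  · intro x hx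
    rw [interior_Icc] at hx
    rw [(eggLog_hasDerivAt n x hx.1.le).deriv]
    exact egg_deriv_pos_key n hn x hx.1 hx.2

lemma eggCore_eq_exp (n : ℕ) (x : ℝ) (hx : 0 ≤ x) :
    eggCore n x = Real.exp (eggLog n x) := by
  rw [eggLog, Real.exp_add, Real.exp_sum]
  have h1 : Real.exp ((n:ℝ) * Real.log ((n:ℝ)+1+x)) = ((n:ℝ)+1+x)^n := by
    rw [← Real.log_pow, Real.exp_log (by positivity)]
  have h2 : ∀ k ∈ Finset.range n,
      Real.exp (Real.log ((k:ℝ)+1+2*x) - 2 * Real.log ((k:ℝ)+1+x))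
        = ((k:ℝ)+1+2*x) / ((k:ℝ)+1+x)^2 := by
    intro k _
    rw [Real.exp_sub, Real.exp_log (by positivity : (0:ℝ) < (k:ℝ)+1+2*x)]
    congr 1
    rw [two_mul, Real.exp_add, Real.exp_log (by positivity : (0:ℝ) < (k:ℝ)+1+x), sq]
  rw [Finset.prod_congr rfl h2, h1, eggCore, Finset.prod_div_distrib, Finset.prod_pow]
  ring

lemma egg_gamma_shift (x : ℝ) (hx : 0 < x) (n : ℕ) :
    Real.Gamma (x + n) = (∏ k ∈ Finset.range n, (x + k)) * Real.Gamma x := by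
  induction n with
  | zero => simp
  | succ n ih =>
    have h : x + ((n+1 : ℕ) : ℝ) = (x + n) + 1 := by push_cast; ring
    rw [h, Real.Gamma_add_one (by positivity), ih, Finset.prod_range_succ]
    ring

lemma egg_eq (n m : ℕ) (hm : 1 ≤ m) :
    eggInvariant n m = 2 * Real.pi ^ (n+1) * eggCore n (1/(m:ℝ)) := by
  have hm0 : (0:ℝ) < (m:ℝ) := by exact_mod_cast Nat.pos_of_ne_zero (by omega)
  have hx : (0:ℝ) < 1/(m:ℝ) := by positivity
  have h2x : (0:ℝ) < 2/(m:ℝ) := by positivity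
  have hGn2 : Real.Gamma ((n:ℝ) + 1 + 2/m)
      = (∏ k ∈ Finset.range n, ((k:ℝ)+1+2*(1/(m:ℝ)))) * Real.Gamma (1 + 2/m) := by
    have := egg_gamma_shift (1 + 2/(m:ℝ)) (by linarith) n
    rw [show (n:ℝ) + 1 + 2/m = (1 + 2/(m:ℝ)) + n by ring, this]
    congr 1
    exact Finset.prod_congr rfl fun k _ => by ring
  have hGn1 : Real.Gamma ((n:ℝ) + 1 + 1/m)
      = (∏ k ∈ Finset.range n, ((k:ℝ)+1+(1/(m:ℝ)))) * Real.Gamma (1 + 1/m) := by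
    have := egg_gamma_shift (1 + 1/(m:ℝ)) (by linarith) n
    rw [show (n:ℝ) + 1 + 1/m = (1 + 1/(m:ℝ)) + n by ring, this]
    congr 1
    exact Finset.prod_congr rfl fun k _ => by ring
  have hG1 : Real.Gamma (1/(m:ℝ)) = Real.Gamma (1 + 1/m) / (1/m) := by
    rw [show (1:ℝ) + 1/m = 1/(m:ℝ) + 1 by ring, Real.Gamma_add_one (ne_of_gt hx)]
    field_simp
  have hG2 : Real.Gamma (2/(m:ℝ)) = Real.Gamma (1 + 2/m) / (2/m) := by
    rw [show (1:ℝ) + 2/m = 2/(m:ℝ) + 1 by ring, Real.Gamma_add_one (ne_of_gt h2x)]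
    field_simp
  have hA : 0 < Real.Gamma (1 + 1/(m:ℝ)) := Real.Gamma_pos_of_pos (by linarith)
  have hB : 0 < Real.Gamma (1 + 2/(m:ℝ)) := Real.Gamma_pos_of_pos (by linarith)
  have hP1 : 0 < ∏ k ∈ Finset.range n, ((k:ℝ)+1+(1/(m:ℝ))) :=
    Finset.prod_pos fun k _ => by positivity
  rw [eggInvariant, eggCore, hGn2, hGn1, hG1, hG2]
  field_simp

lemma egg_value_one (n : ℕ) :
    eggInvariant n 1 = ((n : ℝ) + 2) ^ (n + 1) * Real.pi ^ (n + 1) / (Nat.factorial (n + 1)) := by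
  have hA : Real.Gamma ((n:ℝ)+1+2/(1:ℕ)) = Nat.factorial (n+2) := by
    rw [show (n:ℝ)+1+2/((1:ℕ):ℝ) = (((n+2 : ℕ)):ℝ)+1 by push_cast; ring]
    exact Real.Gamma_nat_eq_factorial _
  have hB : Real.Gamma ((n:ℝ)+1+1/(1:ℕ)) = Nat.factorial (n+1) := by
    rw [show (n:ℝ)+1+1/((1:ℕ):ℝ) = (((n+1 : ℕ)):ℝ)+1 by push_cast; ring]
    exact Real.Gamma_nat_eq_factorial _
  have hC : Real.Gamma (1/((1:ℕ):ℝ)) = 1 := by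
    norm_num [Real.Gamma_one]
  have hD : Real.Gamma (2/((1:ℕ):ℝ)) = 1 := by
    rw [show (2:ℝ)/((1:ℕ):ℝ) = 1 + 1 by norm_num,
      Real.Gamma_add_one (by norm_num), Real.Gamma_one]
    norm_num
  have hfac : (0:ℝ) < Nat.factorial (n+1) := by exact_mod_cast Nat.factorial_pos (n+1)
  rw [eggInvariant, hA, hB, hC, hD]
  rw [show Nat.factorial (n+2) = (n+2) * Nat.factorial (n+1) from Nat.factorial_succ (n+1)]
  push_cast
  field_simp
  ring

/-- **Strict monotonicity of the egg-domain Bergman invariant:** `J_m(0)` is strictly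
decreasing in `m ∈ ℕ`, `m ≥ 1`; in particular `J_m(0) < J_1(0) = (n+2)^{n+1} π^{n+1}/(n+1)!`
for all integers `m > 1`. -/
theorem eggInvariant_strict_anti (n : ℕ) (hn : 1 ≤ n) :
    (∀ m₁ m₂ : ℕ, 1 ≤ m₁ → m₁ < m₂ → eggInvariant n m₂ < eggInvariant n m₁) ∧
    eggInvariant n 1 = ((n : ℝ) + 2) ^ (n + 1) * Real.pi ^ (n + 1) / (Nat.factorial (n + 1)) ∧
    ∀ m : ℕ, 1 < m → eggInvariant n m < eggInvariant n 1 := by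
  have main : ∀ m₁ m₂ : ℕ, 1 ≤ m₁ → m₁ < m₂ → eggInvariant n m₂ < eggInvariant n m₁ := by
    intro m₁ m₂ h1 h12
    have hm₂ : 1 ≤ m₂ := le_trans h1 h12.le
    have hm₁0 : (0:ℝ) < (m₁:ℝ) := by exact_mod_cast Nat.pos_of_ne_zero (by omega)
    have hm₂0 : (0:ℝ) < (m₂:ℝ) := by exact_mod_cast Nat.pos_of_ne_zero (by omega)
    have hm₁1 : (1:ℝ) ≤ (m₁:ℝ) := by exact_mod_cast h1
    have hcast : (m₁:ℝ) < (m₂:ℝ) := by exact_mod_cast h12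
    have hx : (0:ℝ) < 1/(m₂:ℝ) := by positivity
    have hy : (0:ℝ) < 1/(m₁:ℝ) := by positivity
    have hy1 : 1/(m₁:ℝ) ≤ 1 := by
      rw [div_le_one hm₁0]; exact hm₁1
    have hxy : 1/(m₂:ℝ) < 1/(m₁:ℝ) := one_div_lt_one_div_of_lt hm₁0 hcast
    have hmem₂ : (1/(m₂:ℝ)) ∈ Set.Icc (0:ℝ) 1 := ⟨hx.le, le_trans hxy.le hy1⟩
    have hmem₁ : (1/(m₁:ℝ)) ∈ Set.Icc (0:ℝ) 1 := ⟨hy.le, hy1⟩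
    have hlog := eggLog_strictMonoOn n hn hmem₂ hmem₁ hxy
    have hcore : eggCore n (1/(m₂:ℝ)) < eggCore n (1/(m₁:ℝ)) := by
      rw [eggCore_eq_exp n _ hx.le, eggCore_eq_exp n _ hy.le]
      exact Real.exp_lt_exp.2 hlog
    rw [egg_eq n m₁ h1, egg_eq n m₂ hm₂]
    have hpos : (0:ℝ) < 2 * Real.pi ^ (n+1) := by positivity
    exact mul_lt_mul_of_pos_left hcore hpos
  exact ⟨main, egg_value_one n, fun m hm => by
    simpa using main 1 m le_rfl hm⟩
end
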